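/- Let n be an integer with 1 ≤ n ≤ 9, and let a, b₁, …, bₙ be integers with a ≥ 1, b₁ ≥ b₂ ≥ … ≥ bₙ ≥ 0 and a ≥ b₁ + b₂ + b₃ (where bᵢ is interpreted as 0 for i > n). Then: (i) for all odd integers k, e₁, …, eₙ satisfying k² − (e₁² + … + eₙ²) ≥ 9 − n, one has |k·a − Σᵢ eᵢbᵢ| ≥ 3a − Σᵢ bᵢ; and (ii) the maximum of 1 + (a² − Σᵢ bᵢ² − |k·a − Σᵢ eᵢbᵢ|)/2 over all such tuples (k, e₁, …, eₙ) equals (a−1)(a−2)/2 − Σᵢ bᵢ(bᵢ−1)/2, and it is attained at k = 3, e₁ = … = eₙ = 1. -/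

import Mathlib

open Finset

lemma abel_sum (f g : ℕ → ℤ) (n : ℕ) :
    ∑ i ∈ range n, f i * g i =
      (∑ j ∈ range n, (f j - f (j+1)) * (∑ i ∈ range (j+1), g i))
        + f n * (∑ i ∈ range n, g i) := by
  induction n with
  | zero => simp
  | succ n ih =>
    rw [Finset.sum_range_succ (fun i => f i * g i),
        Finset.sum_range_succ (fun j => (f j - f (j+1)) * (∑ i ∈ range (j+1), g i)),
        Finset.sum_range_succ g, ih]
    ring

lemma cval (m : ℕ) :
    (∑ i ∈ range m, (if i < 3 then (1:ℤ) else 0)) = min (m:ℤ) 3 := by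
  induction m with
  | zero => simp
  | succ m ih =>
    rw [Finset.sum_range_succ, ih]
    split_ifs with h <;> omega

lemma odd_sq_ge_one {x : ℤ} (h : Odd x) : 1 ≤ x ^ 2 := by
  have hx : x ≠ 0 := by rintro rfl; simp [Int.odd_iff] at h
  have h1 : 1 ≤ |x| := Int.one_le_abs hx
  calc (1:ℤ) = 1^2 := by norm_num
    _ ≤ |x|^2 := by nlinarith
    _ = x^2 := sq_abs x

lemma partial_bound (n m : ℕ) (hn9 : n ≤ 9) (k : ℤ) (e : ℕ → ℤ)
    (hk : Odd k) (hk3 : 3 ≤ k)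
    (he : ∀ i < n, Odd (e i))
    (hQ : ∑ i ∈ range n, (e i)^2 ≤ k^2 - 9 + n)
    (hm : m ≤ n) :
    ∑ i ∈ range m, (e i - 1) ≤ (k - 3) * min (m:ℤ) 3 := by
  have hsq1 : ∀ i < n, 1 ≤ (e i)^2 := fun i hi => odd_sq_ge_one (he i hi)
  -- partial sum of squares bound
  have hQm : ∑ i ∈ range m, (e i)^2 ≤ k^2 - 9 + m := by
    have hsplit := Finset.sum_range_add_sum_Ico (fun i => (e i)^2) hm
    have hlow : (Finset.Ico m n).card • (1:ℤ) ≤ ∑ i ∈ Finset.Ico m n, (e i)^2 :=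
      Finset.card_nsmul_le_sum _ _ _ (fun j hj => hsq1 j (Finset.mem_Ico.1 hj).2)
    rw [Nat.card_Ico] at hlow
    simp only [nsmul_eq_mul, mul_one] at hlow
    have hc : ((n - m : ℕ) : ℤ) = (n:ℤ) - m := by
      push_cast [Nat.cast_sub hm]; ring
    rw [hc] at hlow
    linarith
  -- individual bound
  have hek : ∀ i < m, e i ≤ k - 2 := by
    intro i hi
    have hi' : i < n := lt_of_lt_of_le hi hm
    have hsq : (e i)^2 ≤ k^2 - 8 := by
      have h1 : (e i)^2 + ∑ j ∈ (range n).erase i, (e j)^2 = ∑ j ∈ range n, (e j)^2 :=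
        Finset.add_sum_erase _ (fun j => (e j)^2) (mem_range.2 hi')
      have h2 : ((range n).erase i).card • (1:ℤ) ≤ ∑ j ∈ (range n).erase i, (e j)^2 :=
        Finset.card_nsmul_le_sum _ _ _
          (fun j hj => hsq1 j (mem_range.1 (Finset.mem_of_mem_erase hj)))
      rw [Finset.card_erase_of_mem (mem_range.2 hi'), card_range] at h2
      simp only [nsmul_eq_mul, mul_one] at h2
      have hc : ((n - 1 : ℕ) : ℤ) = (n:ℤ) - 1 := by
        have : 1 ≤ n := by omega
        push_cast [Nat.cast_sub this]; ring
      rw [hc] at h2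
      linarith
    obtain ⟨x, hx⟩ := hk
    obtain ⟨y, hy⟩ := he i hi'
    by_contra hcon
    push_neg at hcon
    have hke : k ≤ e i := by omega
    nlinarith
  rcases lt_or_ge m 3 with h3 | h3
  · interval_cases m
    · simp
    · have h0 := hek 0 (by norm_num)
      simp [Finset.sum_range_succ]
      linarith
    · have h0 := hek 0 (by norm_num)
      have h1 := hek 1 (by norm_num)
      have : min (2:ℤ) 3 = 2 := by norm_num
      rw [Nat.cast_ofNat, this]
      simp [Finset.sum_range_succ]
      linarith
  · -- Cauchy-Schwarz case
    have hcs := Finset.sum_mul_sq_le_sq_mul_sq (range m) (fun _ => (1:ℤ)) e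
    simp only [one_pow, one_mul, Finset.sum_const, card_range, smul_eq_mul, mul_one, nsmul_eq_mul] at hcs
    set E := ∑ i ∈ range m, e i with hE
    have hE2 : E^2 ≤ (m:ℤ) * (k^2 - 9 + m) := by
      calc E^2 ≤ (m:ℤ) * ∑ i ∈ range m, (e i)^2 := hcs
        _ ≤ (m:ℤ) * (k^2 - 9 + m) := by
            apply mul_le_mul_of_nonneg_left hQm (by positivity)
    have hmz3 : (3:ℤ) ≤ (m:ℤ) := by exact_mod_cast h3
    have hmz9 : (m:ℤ) ≤ 9 := by exact_mod_cast le_trans hm hn9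
    have hmin : min ((m:ℕ):ℤ) 3 = 3 := by omega
    rw [hmin]
    have hsub : ∑ i ∈ range m, (e i - 1) = E - m := by
      rw [Finset.sum_sub_distrib]; simp [hE]
    rw [hsub]
    by_contra hcon
    push_neg at hcon
    have hc1 : 3*k + (m:ℤ) - 8 ≤ E := by linarith
    have hc0 : (0:ℤ) < 3*k + (m:ℤ) - 8 := by linarith
    have hsq' : (3*k + (m:ℤ) - 8)^2 ≤ E^2 := by nlinarith
    have hhint : (0:ℤ) ≤ (9 - (m:ℤ)) * (k-3)^2 := by
      apply mul_nonneg (by linarith) (sq_nonneg _)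
    nlinarith

lemma main_ineq (n : ℕ) (hn9 : n ≤ 9) (a : ℤ) (b : ℕ → ℤ)
    (hmono : ∀ i j : ℕ, i ≤ j → b j ≤ b i)
    (hzero : ∀ i : ℕ, n ≤ i → b i = 0)
    (hsum : b 0 + b 1 + b 2 ≤ a)
    (k : ℤ) (e : ℕ → ℤ) (hk : Odd k) (hk3 : 3 ≤ k)
    (he : ∀ i < n, Odd (e i))
    (hQ : ∑ i ∈ range n, (e i)^2 ≤ k^2 - 9 + n) :
    3 * a - ∑ i ∈ range n, b i ≤ k * a - ∑ i ∈ range n, e i * b i := by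
  set c : ℕ → ℤ := fun i => if i < 3 then 1 else 0 with hc
  have hbn : b n = 0 := hzero n le_rfl
  have habel1 := abel_sum b (fun i => e i - 1) n
  have habel2 := abel_sum b c n
  have hcompare : ∑ j ∈ range n, (b j - b (j+1)) * (∑ i ∈ range (j+1), (e i - 1))
      ≤ ∑ j ∈ range n, (b j - b (j+1)) * ((k-3) * (∑ i ∈ range (j+1), c i)) := by
    apply Finset.sum_le_sum
    intro j hj
    have hd : 0 ≤ b j - b (j+1) := sub_nonneg.2 (hmono j (j+1) (by omega))
    have hjn : j + 1 ≤ n := mem_range.1 hj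
    have hF := partial_bound n (j+1) hn9 k e hk hk3 he hQ hjn
    have hC : (∑ i ∈ range (j+1), c i) = min ((j+1:ℕ):ℤ) 3 := cval (j+1)
    rw [hC]
    exact mul_le_mul_of_nonneg_left hF hd
  have hfac : ∑ j ∈ range n, (b j - b (j+1)) * ((k-3) * (∑ i ∈ range (j+1), c i))
      = (k-3) * ∑ j ∈ range n, (b j - b (j+1)) * (∑ i ∈ range (j+1), c i) := by
    rw [Finset.mul_sum]
    exact Finset.sum_congr rfl (fun j _ => by ring)
  have e1 : ∑ i ∈ range n, b i * c i = ∑ i ∈ range 9, b i * c i := by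
    apply Finset.sum_subset (Finset.range_subset_range.2 hn9)
    intro i _ hni
    have : n ≤ i := by simpa using hni
    simp [hzero i this]
  have e2 : ∑ i ∈ range 3, b i * c i = ∑ i ∈ range 9, b i * c i := by
    apply Finset.sum_subset (Finset.range_subset_range.2 (by norm_num))
    intro i _ hni
    have h3 : ¬ i < 3 := by simpa using hni
    simp [hc, h3]
  have e3 : ∑ i ∈ range 3, b i * c i = b 0 + b 1 + b 2 := by
    simp [hc, Finset.sum_range_succ]
  have hbc : ∑ i ∈ range n, b i * c i = b 0 + b 1 + b 2 := by
    rw [e1, ← e2, e3]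
  have hkey : ∑ i ∈ range n, b i * (e i - 1) ≤ (k-3) * a := by
    calc ∑ i ∈ range n, b i * (e i - 1)
        = (∑ j ∈ range n, (b j - b (j+1)) * (∑ i ∈ range (j+1), (e i - 1)))
            + b n * (∑ i ∈ range n, (e i - 1)) := habel1
      _ ≤ (∑ j ∈ range n, (b j - b (j+1)) * ((k-3) * (∑ i ∈ range (j+1), c i)))
            + b n * (∑ i ∈ range n, (e i - 1)) := by linarith
      _ = (k-3) * (∑ j ∈ range n, (b j - b (j+1)) * (∑ i ∈ range (j+1), c i)) := by
            rw [hfac, hbn]; ring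
      _ = (k-3) * (∑ i ∈ range n, b i * c i) := by
            rw [habel2, hbn]; ring
      _ = (k-3) * (b 0 + b 1 + b 2) := by rw [hbc]
      _ ≤ (k-3) * a := mul_le_mul_of_nonneg_left hsum (by linarith)
  have hsplit : ∑ i ∈ range n, e i * b i
      = (∑ i ∈ range n, b i * (e i - 1)) + ∑ i ∈ range n, b i := by
    rw [← Finset.sum_add_distrib]
    exact Finset.sum_congr rfl (fun i _ => by ring)
  linarith

/-- Computation of the genus function `h` on the lattice `⟨1⟩ ⊕ n⟨−1⟩` for a reduced class
`A = aH − Σ bᵢEᵢ`: every adjunction (characteristic) class `c = kH − Σ eᵢEᵢ` with all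
coefficients odd and `c·c ≥ 9 − n` satisfies `|c·A| ≥ c₀·A = 3a − Σ bᵢ`, and the maximum of
`h_c(A) = 1 + (A·A − |c·A|)/2` equals `(a−1)(a−2)/2 − Σ bᵢ(bᵢ−1)/2`, attained at
`k = 3`, `e₁ = ⋯ = eₙ = 1`.  The coefficients `bᵢ` are indexed from `0`, so `b 0 = b₁`, etc.,
and `b i = 0` for `i ≥ n`. -/
theorem stmt_0 (n : ℕ) (hn1 : 1 ≤ n) (hn9 : n ≤ 9)
    (a : ℤ) (b : ℕ → ℤ) (ha : 1 ≤ a)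
    (hmono : ∀ i j : ℕ, i ≤ j → b j ≤ b i)
    (hzero : ∀ i : ℕ, n ≤ i → b i = 0)
    (hsum : b 0 + b 1 + b 2 ≤ a) :
    (∀ (k : ℤ) (e : ℕ → ℤ), Odd k → (∀ i < n, Odd (e i)) →
        9 - (n : ℤ) ≤ k ^ 2 - ∑ i ∈ Finset.range n, (e i) ^ 2 →
        3 * a - ∑ i ∈ Finset.range n, b i ≤
          |k * a - ∑ i ∈ Finset.range n, e i * b i|) ∧
    IsGreatest
      {x : ℤ | ∃ (k : ℤ) (e : ℕ → ℤ), Odd k ∧ (∀ i < n, Odd (e i)) ∧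
        9 - (n : ℤ) ≤ k ^ 2 - ∑ i ∈ Finset.range n, (e i) ^ 2 ∧
        x = 1 + (a ^ 2 - ∑ i ∈ Finset.range n, (b i) ^ 2 -
          |k * a - ∑ i ∈ Finset.range n, e i * b i|) / 2}
      ((a - 1) * (a - 2) / 2 - ∑ i ∈ Finset.range n, b i * (b i - 1) / 2) ∧
    (a - 1) * (a - 2) / 2 - ∑ i ∈ Finset.range n, b i * (b i - 1) / 2 =
      1 + (a ^ 2 - ∑ i ∈ Finset.range n, (b i) ^ 2 -
        |3 * a - ∑ i ∈ Finset.range n, 1 * b i|) / 2 := by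
  have hS3 : ∑ i ∈ Finset.range n, b i ≤ 3 * a := by
    have pad : ∑ i ∈ Finset.range n, b i = ∑ i ∈ Finset.range 9, b i :=
      Finset.sum_subset (Finset.range_subset_range.2 hn9)
        (fun i _ hni => hzero i (by simpa using hni))
    rw [pad]
    simp only [Finset.sum_range_succ, Finset.sum_range_zero, zero_add]
    linarith [hmono 0 3 (by norm_num), hmono 1 4 (by norm_num), hmono 2 5 (by norm_num),
      hmono 0 6 (by norm_num), hmono 1 7 (by norm_num), hmono 2 8 (by norm_num), hsum]
  have key : ∀ (k : ℤ) (e : ℕ → ℤ), Odd k → (∀ i < n, Odd (e i)) →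
      9 - (n : ℤ) ≤ k ^ 2 - ∑ i ∈ Finset.range n, (e i) ^ 2 →
      3 * a - ∑ i ∈ Finset.range n, b i ≤
        |k * a - ∑ i ∈ Finset.range n, e i * b i| := by
    intro k e hk he hge
    have hQ : ∑ i ∈ Finset.range n, (e i)^2 ≤ k^2 - 9 + n := by linarith
    have hn' : (n:ℤ) ≤ ∑ i ∈ Finset.range n, (e i)^2 := by
      have := Finset.card_nsmul_le_sum (Finset.range n) (fun i => (e i)^2) (1:ℤ)
        (fun i hi => odd_sq_ge_one (he i (Finset.mem_range.1 hi)))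
      simpa using this
    have hk9 : 9 ≤ k^2 := by linarith
    rcases le_or_gt 0 k with hpos | hneg
    · have hk3 : 3 ≤ k := by nlinarith
      have h := main_ineq n hn9 a b hmono hzero hsum k e hk hk3 he hQ
      exact le_trans h (le_abs_self _)
    · have hk3 : 3 ≤ -k := by nlinarith
      have hQ' : ∑ i ∈ Finset.range n, (-e i)^2 ≤ (-k)^2 - 9 + n := by
        simpa [neg_sq] using hQ
      have h := main_ineq n hn9 a b hmono hzero hsum (-k) (fun i => -e i) hk.neg hk3
        (fun i hi => (he i hi).neg) hQ'
      have heq : (-k)*a - ∑ i ∈ Finset.range n, (-e i)*b i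
          = -(k*a - ∑ i ∈ Finset.range n, e i * b i) := by
        have : ∑ i ∈ Finset.range n, (-e i)*b i = -∑ i ∈ Finset.range n, e i * b i := by
          rw [← Finset.sum_neg_distrib]
          exact Finset.sum_congr rfl (fun i _ => by ring)
        rw [this]; ring
      rw [heq] at h
      exact le_trans h (neg_le_abs _)
  have habs0 : |3*a - ∑ i ∈ Finset.range n, 1 * b i|
      = 3*a - ∑ i ∈ Finset.range n, b i := by
    simp only [one_mul]
    exact abs_of_nonneg (by linarith)
  have hdvd1 : (2:ℤ) ∣ (a-1)*(a-2) := by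
    have h0 := Int.even_mul_succ_self (a-2)
    have h2 : Even ((a-1)*(a-2)) := by
      rw [mul_comm]
      convert h0 using 2
      ring
    exact h2.two_dvd
  have hL : 2 * ((a-1)*(a-2)/2) = (a-1)*(a-2) := Int.mul_ediv_cancel' hdvd1
  have hM : 2 * (∑ i ∈ Finset.range n, b i * (b i - 1) / 2)
      = (∑ i ∈ Finset.range n, (b i)^2) - ∑ i ∈ Finset.range n, b i := by
    rw [Finset.mul_sum]
    have hcg : ∀ i ∈ Finset.range n, 2 * (b i * (b i - 1) / 2) = (b i)^2 - b i := by
      intro i _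
      have h0 := Int.even_mul_succ_self (b i - 1)
      have h2 : Even (b i * (b i - 1)) := by
        rw [mul_comm]
        convert h0 using 2
        ring
      rw [Int.mul_ediv_cancel' h2.two_dvd]
      ring
    rw [Finset.sum_congr rfl hcg, Finset.sum_sub_distrib]
  have hval : (a - 1) * (a - 2) / 2 - ∑ i ∈ Finset.range n, b i * (b i - 1) / 2 =
      1 + (a ^ 2 - ∑ i ∈ Finset.range n, (b i) ^ 2 -
        |3 * a - ∑ i ∈ Finset.range n, 1 * b i|) / 2 := by
    rw [habs0]
    have hnum : a^2 - (∑ i ∈ Finset.range n, (b i)^2)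
        - (3*a - ∑ i ∈ Finset.range n, b i)
        = 2 * ((a-1)*(a-2)/2 - (∑ i ∈ Finset.range n, b i * (b i - 1) / 2) - 1) := by
      rw [mul_sub, mul_sub, hL, hM]; ring
    rw [hnum, Int.mul_ediv_cancel_left _ (by norm_num)]
    ring
  refine ⟨key, ⟨⟨3, fun _ => 1, ⟨1, by norm_num⟩, fun i _ => odd_one, by simp, ?_⟩, ?_⟩, hval⟩
  · simpa using hval
  · intro x hx
    obtain ⟨k, e, hk, he, hge, rfl⟩ := hx
    have h1 := key k e hk he hge
    have h2 : a^2 - (∑ i ∈ Finset.range n, (b i)^2)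
        - |k*a - ∑ i ∈ Finset.range n, e i * b i|
        ≤ a^2 - (∑ i ∈ Finset.range n, (b i)^2)
          - (3*a - ∑ i ∈ Finset.range n, b i) := by linarith
    have h3 := Int.ediv_le_ediv (by norm_num : (0:ℤ) < 2) h2
    rw [hval, habs0]
    linarith
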